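/- arXiv:1903.08897 — 2 statements merged into one kernel-verified Lean document; each statement's English description precedes it below -/
import Mathlib

section
/- (Theorem 2.2) Let H, J, K be 4×4 real matrices satisfying the Hamiltonian conditions H² = J² = K² = HJK = −E, with associated block map P. Let A ∈ ℍ^{m×n} and b ∈ ℍ^{m×1}, so that P(A) ∈ ℝ^{4m×4n} has columns a₁,…,a_{4n} and P(b) ∈ ℝ^{4m×4} has columns b₁, b₂, b₃, b₄. If some column b_t (1 ≤ t ≤ 4) is a real linear combination of a₁,…,a_{4n}, then each of the four columns b₁, b₂, b₃, b₄ is a real linear combination of a₁,…,a_{4n}. -/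
open Matrix

/-- The real `4×4` matrix representation of a quaternion determined by matrices
`H, J, K` (assumed to satisfy the Hamiltonian conditions). -/
noncomputable def qRep (H J K : Matrix (Fin 4) (Fin 4) ℝ) (q : Quaternion ℝ) :
    Matrix (Fin 4) (Fin 4) ℝ :=
  q.re • (1 : Matrix (Fin 4) (Fin 4) ℝ) + q.imI • H + q.imJ • J + q.imK • K

/-- The block real matrix representation of a quaternion matrix: the `(s,t)` block
of `pRep H J K A` is `qRep H J K (A s t)`. -/
noncomputable def pRep (H J K : Matrix (Fin 4) (Fin 4) ℝ) {m n : ℕ}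
    (A : Matrix (Fin m) (Fin n) (Quaternion ℝ)) :
    Matrix (Fin m × Fin 4) (Fin n × Fin 4) ℝ :=
  Matrix.of fun p q => qRep H J K (A p.1 q.1) p.2 q.2

section Aux

variable (H J K : Matrix (Fin 4) (Fin 4) ℝ)

lemma qRep_mul (hH : H * H = -1) (hJ : J * J = -1) (hK : K * K = -1)
    (hHJK : H * J * K = -1) (p q : Quaternion ℝ) :
    qRep H J K (p * q) = qRep H J K p * qRep H J K q := by
  have hHJ : H * J = K := by
    have h1 : H * J * K * K = -1 * K := by rw [hHJK]
    rw [mul_assoc, hK, mul_neg, mul_one, neg_one_mul] at h1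
    exact neg_injective h1
  have hJHJ : J * H * J = H := by
    have h1 : H * (J * H * J) = H * H := by
      calc H * (J * H * J) = (H * J) * (H * J) := by noncomm_ring
        _ = K * K := by rw [hHJ]
        _ = H * H := by rw [hK, hH]
    have h2 := congrArg ((-H) * ·) h1
    simpa [← mul_assoc, neg_mul, hH] using h2
  have hJH : J * H = -K := by
    have h1 : J * H * J * J = H * J := by rw [hJHJ]
    rw [mul_assoc (J*H), hJ, mul_neg, mul_one, hHJ] at h1
    linear_combination (norm := noncomm_ring) -h1
  have hJK : J * K = H := by rw [← hHJ, ← mul_assoc, hJHJ]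
  have hHK : H * K = -J := by rw [← hHJ, ← mul_assoc, hH, neg_one_mul]
  have hKH : K * H = J := by
    rw [← hHJ, mul_assoc, hJH, mul_neg, hHK, neg_neg]
  have hKJ : K * J = -H := by rw [← hHJ, mul_assoc, hJ, mul_neg, mul_one]
  simp only [qRep, Quaternion.re_mul, Quaternion.imI_mul, Quaternion.imJ_mul, Quaternion.imK_mul,
    add_mul, mul_add, Matrix.smul_mul, Matrix.mul_smul, smul_smul, one_mul, mul_one,
    hH, hJ, hK, hHJ, hJH, hJK, hKJ, hKH, hHK, smul_neg, sub_smul, add_smul, mul_comm]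
  module

/-- The linear map `q ↦ Q(q) e_{t2}` sending a quaternion to the `t2`-th column of
its real representation. -/
noncomputable def qVec (t2 : Fin 4) : Quaternion ℝ →ₗ[ℝ] (Fin 4 → ℝ) where
  toFun q := (qRep H J K q).mulVec (Pi.single t2 1)
  map_add' p q := by
    show qRep H J K (p + q) *ᵥ Pi.single t2 1 = _
    have : qRep H J K (p + q) = qRep H J K p + qRep H J K q := by
      simp only [qRep, Quaternion.re_add, Quaternion.imI_add, Quaternion.imJ_add,
        Quaternion.imK_add, add_smul]
      abel
    rw [this, Matrix.add_mulVec]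
  map_smul' r q := by
    show qRep H J K (r • q) *ᵥ Pi.single t2 1 = _
    have : qRep H J K (r • q) = r • qRep H J K q := by
      simp only [qRep, Quaternion.re_smul, Quaternion.imI_smul, Quaternion.imJ_smul,
        Quaternion.imK_smul, smul_eq_mul, mul_smul, smul_add]
    rw [this, Matrix.smul_mulVec]
    rfl

lemma qVec_apply (t2 : Fin 4) (q : Quaternion ℝ) (i : Fin 4) :
    qVec H J K t2 q i = qRep H J K q i t2 := by
  simp [qVec, Matrix.mulVec_single]

lemma qVec_bijective (hH : H * H = -1) (hJ : J * J = -1) (hK : K * K = -1)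
    (hHJK : H * J * K = -1) (t2 : Fin 4) :
    Function.Bijective (qVec H J K t2) := by
  have hinj : Function.Injective (qVec H J K t2) := by
    rw [injective_iff_map_eq_zero]
    intro q hq
    have hq' : (qRep H J K q).mulVec (Pi.single t2 1) = 0 := hq
    have h2 : (qRep H J K (star q) * qRep H J K q).mulVec (Pi.single t2 1) = 0 := by
      rw [← Matrix.mulVec_mulVec, hq', Matrix.mulVec_zero]
    rw [← qRep_mul H J K hH hJ hK hHJK, Quaternion.star_mul_self] at h2
    have h3 : qRep H J K ((Quaternion.normSq q : ℝ) : Quaternion ℝ)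
        = (Quaternion.normSq q : ℝ) • (1 : Matrix (Fin 4) (Fin 4) ℝ) := by
      simp [qRep]
    rw [h3, Matrix.smul_mulVec, Matrix.one_mulVec] at h2
    have h4 := congrFun h2 t2
    simp only [Pi.smul_apply, Pi.single_eq_same, smul_eq_mul, mul_one, Pi.zero_apply] at h4
    exact Quaternion.normSq_eq_zero.mp h4
  exact ⟨hinj, (LinearMap.injective_iff_surjective_of_finrank_eq_finrank
    (by simp [Quaternion.finrank_eq_four, Module.finrank_pi])).mp hinj⟩

end Aux

/-- Theorem 2.2: if one column of `P(b)` (for `b ∈ ℍ^{m×1}`) is a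
real linear combination of the columns of `P(A)`, then so are all four columns. -/
theorem pRep_col_span (H J K : Matrix (Fin 4) (Fin 4) ℝ)
    (hH : H * H = -1) (hJ : J * J = -1) (hK : K * K = -1)
    (hHJK : H * J * K = -1) {m n : ℕ}
    (A : Matrix (Fin m) (Fin n) (Quaternion ℝ))
    (b : Matrix (Fin m) (Fin 1) (Quaternion ℝ))
    (t : Fin 1 × Fin 4)
    (h : ∃ x : Fin n × Fin 4 → ℝ,
      (pRep H J K A).mulVec x = fun row => pRep H J K b row t) :
    ∀ t' : Fin 1 × Fin 4, ∃ x : Fin n × Fin 4 → ℝ,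
      (pRep H J K A).mulVec x = fun row => pRep H J K b row t' := by
  obtain ⟨x, hx⟩ := h
  intro t'
  set φ := qVec H J K t.2 with hφdef
  have hbij := qVec_bijective H J K hH hJ hK hHJK t.2
  set ψ := LinearEquiv.ofBijective φ hbij with hψdef
  have hψ : ∀ q, (ψ q : Fin 4 → ℝ) = φ q := fun q => rfl
  -- commutation: Q(a) applied to φ q is φ (a*q)
  have key : ∀ (a q : Quaternion ℝ),
      (qRep H J K a).mulVec (φ q) = φ (a * q) := by
    intro a q
    show (qRep H J K a).mulVec ((qRep H J K q).mulVec (Pi.single t.2 1)) = _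
    rw [Matrix.mulVec_mulVec, ← qRep_mul H J K hH hJ hK hHJK]
    rfl
  -- the quaternion solution
  set y : Fin n → Quaternion ℝ := fun j => ψ.symm (fun r => x (j, r)) with hy
  have hφy : ∀ j, φ (y j) = fun r => x (j, r) := by
    intro j
    rw [← hψ, hy]
    exact ψ.apply_symm_apply _
  have hsol : ∀ s : Fin m, ∑ j, A s j * y j = b s 0 := by
    intro s
    apply hbij.1
    show φ _ = φ _
    rw [map_sum]
    funext i
    have hxs := congrFun hx (s, i)
    simp only [Matrix.mulVec, dotProduct, Fintype.sum_prod_type] at hxs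
    have lhs : ∀ j, φ (A s j * y j) = (qRep H J K (A s j)).mulVec (fun r => x (j, r)) := by
      intro j; rw [← key, hφy]
    simp only [Finset.sum_apply, lhs]
    have : t.1 = 0 := Subsingleton.elim _ _
    rw [← this]
    calc ∑ j, (qRep H J K (A s j)).mulVec (fun r => x (j, r)) i
        = ∑ j, ∑ r, pRep H J K A (s, i) (j, r) * x (j, r) := by
          simp [Matrix.mulVec, dotProduct, pRep]
      _ = pRep H J K b (s, i) t := hxs
      _ = φ (b s t.1) i := by rw [qVec_apply]; rfl
  -- the new real solution
  refine ⟨fun p => φ (y p.1 * (ψ.symm (Pi.single t'.2 1))) p.2, ?_⟩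
  set u := ψ.symm (Pi.single t'.2 1) with hu
  have hφu : φ u = Pi.single t'.2 1 := by rw [← hψ, hu]; exact ψ.apply_symm_apply _
  funext row
  obtain ⟨s, i⟩ := row
  simp only [Matrix.mulVec, dotProduct, Fintype.sum_prod_type]
  have lhs : ∀ j, ∑ r, pRep H J K A (s, i) (j, r) * φ (y j * u) r
      = φ (A s j * (y j * u)) i := by
    intro j
    rw [← key (A s j) (y j * u)]
    simp [Matrix.mulVec, dotProduct, pRep]
  simp only [lhs]
  have : ∑ j, φ (A s j * (y j * u)) i = φ ((∑ j, A s j * y j) * u) i := by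
    rw [Finset.sum_mul, map_sum]
    simp only [Finset.sum_apply, mul_assoc]
  rw [this, hsol]
  have ht'1 : t'.1 = 0 := Subsingleton.elim _ _
  rw [show pRep H J K b (s, i) t' = qRep H J K (b s 0) i t'.2 by rw [pRep, ← ht'1]; rfl]
  rw [← qVec_apply, show qVec H J K t'.2 (b s 0) = (qRep H J K (b s 0)).mulVec (Pi.single t'.2 1) from rfl,
    ← hφu, key]
end

section
/- (Theorem 3.1, right eigenvalue part) Let (H,J,K) and (H̃,J̃,K̃) be two triples of 4×4 real matrices, each satisfying the Hamiltonian conditions (H² = J² = K² = HJK = −E and H̃² = J̃² = K̃² = H̃J̃K̃ = −E), with associated maps Q, P and Q̃, P̃ respectively. Let A, B ∈ ℍ^{m×m} satisfy P(A) = P̃(B), and let λ, γ ∈ ℍ satisfy Q(λ) = Q̃(γ). If λ is a right eigenvalue of A, then γ is a right eigenvalue of B. -/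
open Matrix

/-- `λ` is a left eigenvalue of `A` if `A v = λ v` for some nonzero `v`. -/
def IsLeftEigenvalue {m : ℕ} (A : Matrix (Fin m) (Fin m) (Quaternion ℝ))
    (l : Quaternion ℝ) : Prop :=
  ∃ v : Fin m → Quaternion ℝ, v ≠ 0 ∧ A.mulVec v = l • v

/-- `λ` is a right eigenvalue of `A` if `A v = v λ` for some nonzero `v`. -/
def IsRightEigenvalue {m : ℕ} (A : Matrix (Fin m) (Fin m) (Quaternion ℝ))
    (l : Quaternion ℝ) : Prop :=
  ∃ v : Fin m → Quaternion ℝ, v ≠ 0 ∧ A.mulVec v = fun s => v s * l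

section Aux

/-! ### Auxiliary material -/

noncomputable def qi : Quaternion ℝ := ⟨0,1,0,0⟩
noncomputable def qj : Quaternion ℝ := ⟨0,0,1,0⟩
noncomputable def qk : Quaternion ℝ := ⟨0,0,0,1⟩

lemma quat_decomp (q : Quaternion ℝ) :
    q = q.re • 1 + q.imI • qi + q.imJ • qj + q.imK • qk := by
  ext <;> simp [Quaternion.re_one, Quaternion.imI_one, Quaternion.imJ_one, Quaternion.imK_one] <;> simp [qi, qj, qk]

lemma pi_identity' (u x y z c g : Quaternion ℝ) :
    ((g*1).re • u + (g*1).imI • x + (g*1).imJ • y + (g*1).imK • z) * c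
    - ((g*qi).re • u + (g*qi).imI • x + (g*qi).imJ • y + (g*qi).imK • z) * (c * qi)
    - ((g*qj).re • u + (g*qj).imI • x + (g*qj).imJ • y + (g*qj).imK • z) * (c * qj)
    - ((g*qk).re • u + (g*qk).imI • x + (g*qk).imJ • y + (g*qk).imK • z) * (c * qk)
    = (u*c - x*(c*qi) - y*(c*qj) - z*(c*qk)) * g := by
  ext <;>
    simp [Quaternion.re_mul, Quaternion.imI_mul, Quaternion.imJ_mul,
      Quaternion.imK_mul, Quaternion.re_one, Quaternion.imI_one, Quaternion.imJ_one,
      Quaternion.imK_one] <;> simp [qi, qj, qk] <;>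
    ring

lemma annihilate (u x y z : Quaternion ℝ)
    (h1 : u*1 - x*(1*qi) - y*(1*qj) - z*(1*qk) = 0)
    (h2 : u*qi - x*(qi*qi) - y*(qi*qj) - z*(qi*qk) = 0)
    (h3 : u*qj - x*(qj*qi) - y*(qj*qj) - z*(qj*qk) = 0)
    (h4 : u*qk - x*(qk*qi) - y*(qk*qj) - z*(qk*qk) = 0) :
    u = 0 ∧ x = 0 ∧ y = 0 ∧ z = 0 := by
  rw [Quaternion.ext_iff] at h1 h2 h3 h4
  simp [Quaternion.re_mul, Quaternion.imI_mul, Quaternion.imJ_mul, Quaternion.imK_mul,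
    Quaternion.re_one, Quaternion.imI_one, Quaternion.imJ_one, Quaternion.imK_one,
    Quaternion.re_zero, Quaternion.imI_zero, Quaternion.imJ_zero, Quaternion.imK_zero] at h1 h2 h3 h4
  simp [qi, qj, qk] at h1 h2 h3 h4
  obtain ⟨a1,a2,a3,a4⟩ := h1
  obtain ⟨b1,b2,b3,b4⟩ := h2
  obtain ⟨c1,c2,c3,c4⟩ := h3
  obtain ⟨d1,d2,d3,d4⟩ := h4
  refine ⟨?_,?_,?_,?_⟩ <;> ext <;> simp [Quaternion.re_zero, Quaternion.imI_zero, Quaternion.imJ_zero, Quaternion.imK_zero] <;>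
    linarith [a1,a2,a3,a4,b1,b2,b3,b4,c1,c2,c3,c4,d1,d2,d3,d4]

variable (H J K : Matrix (Fin 4) (Fin 4) ℝ)

lemma qRep_one : qRep H J K 1 = 1 := by simp [qRep, Quaternion.re_one, Quaternion.imI_one, Quaternion.imJ_one, Quaternion.imK_one]

lemma qRep_zero : qRep H J K 0 = 0 := by simp [qRep, Quaternion.re_zero, Quaternion.imI_zero, Quaternion.imJ_zero, Quaternion.imK_zero]

lemma qRep_add (a b : Quaternion ℝ) :
    qRep H J K (a+b) = qRep H J K a + qRep H J K b := by
  simp only [qRep, Quaternion.re_add, Quaternion.imI_add, Quaternion.imJ_add,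
    Quaternion.imK_add, add_smul]
  abel

lemma qRep_smul (r : ℝ) (a : Quaternion ℝ) : qRep H J K (r • a) = r • qRep H J K a := by
  simp only [qRep, Quaternion.re_smul, Quaternion.imI_smul, Quaternion.imJ_smul,
    Quaternion.imK_smul, smul_eq_mul, smul_add, smul_smul]

lemma qRep_sum {m : ℕ} (f : Fin m → Quaternion ℝ) :
    qRep H J K (∑ t, f t) = ∑ t, qRep H J K (f t) := by
  let h : Quaternion ℝ →+ Matrix (Fin 4) (Fin 4) ℝ :=
    { toFun := qRep H J K, map_zero' := qRep_zero H J K, map_add' := qRep_add H J K }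
  exact map_sum h f Finset.univ

section Table
variable (hH : H * H = -1) (hJ : J * J = -1) (hK : K * K = -1) (hHJK : H * J * K = -1)
include hH hJ hK hHJK
set_option linter.unusedSectionVars false

lemma tbl_HJ : H * J = K := by
  have h : H*J*(K*K) = -1*K := by rw [← mul_assoc, hHJK]
  rw [hK] at h; simpa using h

lemma tbl_JK : J * K = H := by
  have h : (H*H)*(J*K) = H*(-1) := by
    rw [show (H*H)*(J*K) = H*(H*J*K) from by noncomm_ring, hHJK]
  rw [hH] at h; simpa using h

lemma tbl_HK : H * K = -J := by
  conv_lhs => rw [← tbl_JK H J K hH hJ hK hHJK]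
  rw [mul_assoc, hK]; simp

lemma tbl_KJ : K * J = -H := by
  conv_lhs => rw [← tbl_HJ H J K hH hJ hK hHJK]
  rw [mul_assoc, hJ]; simp

lemma tbl_JH : J * H = -K := by
  conv_lhs => rw [← tbl_JK H J K hH hJ hK hHJK]
  rw [← mul_assoc, hJ]; simp

lemma tbl_KH : K * H = J := by
  conv_lhs => rw [← tbl_JK H J K hH hJ hK hHJK]
  rw [← mul_assoc, tbl_KJ H J K hH hJ hK hHJK, neg_mul, tbl_HK H J K hH hJ hK hHJK, neg_neg]

lemma qRep_mul_s12 (a b : Quaternion ℝ) :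
    qRep H J K (a*b) = qRep H J K a * qRep H J K b := by
  simp only [qRep, Quaternion.re_mul, Quaternion.imI_mul, Quaternion.imJ_mul,
    Quaternion.imK_mul, add_mul, mul_add, Matrix.smul_mul, Matrix.mul_smul, one_mul, mul_one,
    hH, hJ, hK, tbl_HJ H J K hH hJ hK hHJK, tbl_JK H J K hH hJ hK hHJK,
    tbl_HK H J K hH hJ hK hHJK, tbl_KJ H J K hH hJ hK hHJK,
    tbl_JH H J K hH hJ hK hHJK, tbl_KH H J K hH hJ hK hHJK,
    smul_neg, add_smul, sub_smul, smul_smul]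
  module

end Table

/-- the linear map `q ↦ Q(q) (1,1,1,1)ᵀ`. -/
noncomputable def qL : Quaternion ℝ →ₗ[ℝ] (Fin 4 → ℝ) where
  toFun q := (qRep H J K q).mulVec 1
  map_add' a b := by
    show (qRep H J K (a+b)).mulVec 1 = (qRep H J K a).mulVec 1 + (qRep H J K b).mulVec 1
    rw [qRep_add, Matrix.add_mulVec]
  map_smul' r a := by
    show (qRep H J K (r • a)).mulVec 1 = r • (qRep H J K a).mulVec 1
    rw [qRep_smul, Matrix.smul_mulVec]

variable (hmul : ∀ a b : Quaternion ℝ, qRep H J K (a*b) = qRep H J K a * qRep H J K b)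
include hmul

lemma qL_inj : Function.Injective (qL H J K) := by
  rw [injective_iff_map_eq_zero]
  intro q hq
  by_contra hq0
  have h1 : (qRep H J K (q⁻¹ * q)).mulVec 1 = 0 := by
    rw [hmul, ← Matrix.mulVec_mulVec]
    show (qRep H J K q⁻¹).mulVec (qL H J K q) = 0
    rw [hq, Matrix.mulVec_zero]
  rw [inv_mul_cancel₀ hq0, qRep_one, Matrix.one_mulVec] at h1
  have := congrFun h1 0
  norm_num at this

lemma qL_bij : Function.Bijective (qL H J K) := by
  refine ⟨qL_inj H J K hmul, ?_⟩
  have h4 : Module.finrank ℝ (Quaternion ℝ) = Module.finrank ℝ (Fin 4 → ℝ) := by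
    rw [Quaternion.finrank_eq_four]; simp
  exact (LinearMap.injective_iff_surjective_of_finrank_eq_finrank h4).mp (qL_inj H J K hmul)

/-- the module isomorphism `ℝ⁴ ≃ ℍ` intertwining `qRep` with left multiplication. -/
noncomputable def qPsi : (Fin 4 → ℝ) ≃ₗ[ℝ] Quaternion ℝ :=
  (LinearEquiv.ofBijective (qL H J K) (qL_bij H J K hmul)).symm

lemma qPsi_prop (q : Quaternion ℝ) (x : Fin 4 → ℝ) :
    qPsi H J K hmul ((qRep H J K q).mulVec x) = q * qPsi H J K hmul x := by
  set e := LinearEquiv.ofBijective (qL H J K) (qL_bij H J K hmul)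
  have hx : x = e (qPsi H J K hmul x) := by simp [qPsi, e]
  rw [hx]
  set p := qPsi H J K hmul x
  have h2 : (qRep H J K q).mulVec (e p) = e (q * p) := by
    show (qRep H J K q).mulVec ((qRep H J K p).mulVec 1) = (qRep H J K (q*p)).mulVec 1
    rw [Matrix.mulVec_mulVec, hmul]
  rw [h2]
  simp [qPsi, e, p]

lemma qPsi_symm_prop (q : Quaternion ℝ) (p : Quaternion ℝ) :
    (qRep H J K q).mulVec ((qPsi H J K hmul).symm p) = (qPsi H J K hmul).symm (q * p) := by
  apply (qPsi H J K hmul).injective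
  rw [qPsi_prop]; simp

end Aux

section Main

variable (H J K H' J' K' : Matrix (Fin 4) (Fin 4) ℝ)
variable (hmul' : ∀ a b : Quaternion ℝ, qRep H' J' K' (a*b) = qRep H' J' K' a * qRep H' J' K' b)

/-- The conjugated linear action of `qRep H J K p` transported to `ℍ` via the primed
module isomorphism. -/
noncomputable def Ffun (p q : Quaternion ℝ) : Quaternion ℝ :=
  qPsi H' J' K' hmul' ((qRep H J K p).mulVec ((qPsi H' J' K' hmul').symm q))

lemma Ffun_dec (p q : Quaternion ℝ) :
    Ffun H J K H' J' K' hmul' p q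
      = q.re • Ffun H J K H' J' K' hmul' p 1 + q.imI • Ffun H J K H' J' K' hmul' p qi
        + q.imJ • Ffun H J K H' J' K' hmul' p qj + q.imK • Ffun H J K H' J' K' hmul' p qk := by
  unfold Ffun
  conv_lhs => rw [quat_decomp q]
  simp only [map_add, _root_.map_smul, Matrix.mulVec_add, Matrix.mulVec_smul]

end Main

section Main2

variable (H J K H' J' K' : Matrix (Fin 4) (Fin 4) ℝ)
variable (hmul : ∀ a b : Quaternion ℝ, qRep H J K (a*b) = qRep H J K a * qRep H J K b)
variable (hmul' : ∀ a b : Quaternion ℝ, qRep H' J' K' (a*b) = qRep H' J' K' a * qRep H' J' K' b)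

lemma sum_mulVec' {m : ℕ} (M : Fin m → Matrix (Fin 4) (Fin 4) ℝ) (x : Fin 4 → ℝ) :
    (∑ t, M t) *ᵥ x = ∑ t, M t *ᵥ x :=
  map_sum (AddMonoidHom.mk' (fun N => N *ᵥ x) (fun a b => Matrix.add_mulVec a b x)) M Finset.univ

include hmul hmul' in
lemma key_step {m : ℕ} (A B : Matrix (Fin m) (Fin m) (Quaternion ℝ))
    (hABe : ∀ s t, qRep H J K (A s t) = qRep H' J' K' (B s t))
    (l g : Quaternion ℝ) (hlg : qRep H J K l = qRep H' J' K' g)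
    (v : Fin m → Quaternion ℝ) (hv : A.mulVec v = fun s => v s * l) (s : Fin m)
    (q : Quaternion ℝ) :
    ∑ t, B s t * Ffun H J K H' J' K' hmul' (v t) q
      = Ffun H J K H' J' K' hmul' (v s) (g * q) := by
  have hAv : ∀ s, (∑ t, A s t * v t) = v s * l := by
    intro s
    have h := congrFun hv s
    simpa [Matrix.mulVec, dotProduct] using h
  calc ∑ t, B s t * Ffun H J K H' J' K' hmul' (v t) q
      = ∑ t, qPsi H' J' K' hmul'
          ((qRep H' J' K' (B s t)).mulVec
            ((qRep H J K (v t)).mulVec ((qPsi H' J' K' hmul').symm q))) := by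
        refine Finset.sum_congr rfl fun t _ => ?_
        rw [qPsi_prop]
        rfl
    _ = qPsi H' J' K' hmul'
          ((∑ t, qRep H J K (A s t * v t)).mulVec ((qPsi H' J' K' hmul').symm q)) := by
        rw [sum_mulVec', map_sum]
        refine Finset.sum_congr rfl fun t _ => ?_
        rw [Matrix.mulVec_mulVec, ← hABe s t, ← hmul]
    _ = qPsi H' J' K' hmul'
          ((qRep H J K (v s * l)).mulVec ((qPsi H' J' K' hmul').symm q)) := by
        rw [← qRep_sum, hAv s]
    _ = qPsi H' J' K' hmul'
          ((qRep H J K (v s)).mulVec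
            ((qRep H' J' K' g).mulVec ((qPsi H' J' K' hmul').symm q))) := by
        rw [hmul, ← Matrix.mulVec_mulVec, hlg]
    _ = Ffun H J K H' J' K' hmul' (v s) (g * q) := by
        rw [qPsi_symm_prop]
        rfl

end Main2

/-- Theorem 3.1, right part: if `P(A) = P̃(B)` and `Q(λ) = Q̃(γ)`
for two Hamiltonian triples, then right eigenvalues correspond. -/
theorem right_eigenvalue_of_pRep_eq
    (H J K H' J' K' : Matrix (Fin 4) (Fin 4) ℝ)
    (hH : H * H = -1) (hJ : J * J = -1) (hK : K * K = -1)
    (hHJK : H * J * K = -1)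
    (hH' : H' * H' = -1) (hJ' : J' * J' = -1) (hK' : K' * K' = -1)
    (hHJK' : H' * J' * K' = -1) {m : ℕ}
    (A B : Matrix (Fin m) (Fin m) (Quaternion ℝ))
    (hAB : pRep H J K A = pRep H' J' K' B)
    (l g : Quaternion ℝ) (hlg : qRep H J K l = qRep H' J' K' g)
    (h : IsRightEigenvalue A l) : IsRightEigenvalue B g := by
  obtain ⟨v, hv0, hv⟩ := h
  have hmul := qRep_mul_s12 H J K hH hJ hK hHJK
  have hmul' := qRep_mul_s12 H' J' K' hH' hJ' hK' hHJK'
  have hABe : ∀ s t, qRep H J K (A s t) = qRep H' J' K' (B s t) := by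
    intro s t
    ext p q
    exact congrFun (congrFun hAB (s, p)) (t, q)
  -- the candidate eigenvectors, one for each `c`
  let w : Quaternion ℝ → Fin m → Quaternion ℝ := fun c s =>
    Ffun H J K H' J' K' hmul' (v s) 1 * c - Ffun H J K H' J' K' hmul' (v s) qi * (c * qi)
      - Ffun H J K H' J' K' hmul' (v s) qj * (c * qj)
      - Ffun H J K H' J' K' hmul' (v s) qk * (c * qk)
  -- each `w c` satisfies the eigen equation
  have hkey : ∀ c, B.mulVec (w c) = fun s => w c s * g := by
    intro c
    funext s
    have e1 := key_step H J K H' J' K' hmul hmul' A B hABe l g hlg v hv s 1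
    have e2 := key_step H J K H' J' K' hmul hmul' A B hABe l g hlg v hv s qi
    have e3 := key_step H J K H' J' K' hmul hmul' A B hABe l g hlg v hv s qj
    have e4 := key_step H J K H' J' K' hmul hmul' A B hABe l g hlg v hv s qk
    have expand : B.mulVec (w c) s
        = (∑ t, B s t * Ffun H J K H' J' K' hmul' (v t) 1) * c
          - (∑ t, B s t * Ffun H J K H' J' K' hmul' (v t) qi) * (c * qi)
          - (∑ t, B s t * Ffun H J K H' J' K' hmul' (v t) qj) * (c * qj)
          - (∑ t, B s t * Ffun H J K H' J' K' hmul' (v t) qk) * (c * qk) := by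
      show ∑ t, B s t * w c t = _
      simp only [w, mul_sub, Finset.sum_sub_distrib, ← mul_assoc, Finset.sum_mul]
    rw [expand, e1, e2, e3, e4,
      Ffun_dec H J K H' J' K' hmul' (v s) (g*1), Ffun_dec H J K H' J' K' hmul' (v s) (g*qi),
      Ffun_dec H J K H' J' K' hmul' (v s) (g*qj), Ffun_dec H J K H' J' K' hmul' (v s) (g*qk)]
    exact pi_identity' (Ffun H J K H' J' K' hmul' (v s) 1) (Ffun H J K H' J' K' hmul' (v s) qi)
      (Ffun H J K H' J' K' hmul' (v s) qj) (Ffun H J K H' J' K' hmul' (v s) qk) c g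
  -- some `w c` is nonzero
  obtain ⟨s0, hs0⟩ : ∃ s0, v s0 ≠ 0 := by
    by_contra hc; push_neg at hc
    exact hv0 (funext hc)
  have hex : ∃ c, w c s0 ≠ 0 := by
    by_contra hc; push_neg at hc
    have h1 := hc 1
    have h2 := hc qi
    have h3 := hc qj
    have h4 := hc qk
    simp only [w] at h1 h2 h3 h4
    obtain ⟨z1, z2, z3, z4⟩ := annihilate (Ffun H J K H' J' K' hmul' (v s0) 1)
      (Ffun H J K H' J' K' hmul' (v s0) qi) (Ffun H J K H' J' K' hmul' (v s0) qj)
      (Ffun H J K H' J' K' hmul' (v s0) qk)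
      (by simpa using h1) h2 h3 h4
    -- hence `Ffun (v s0)` vanishes identically, so `v s0 = 0`
    have hFz : ∀ q, Ffun H J K H' J' K' hmul' (v s0) q = 0 := by
      intro q
      rw [Ffun_dec H J K H' J' K' hmul' (v s0) q, z1, z2, z3, z4]
      simp
    have hvec : (qRep H J K (v s0)).mulVec 1 = 0 := by
      have h5 := hFz (qPsi H' J' K' hmul' 1)
      unfold Ffun at h5
      rw [LinearEquiv.symm_apply_apply] at h5
      exact ((qPsi H' J' K' hmul').map_eq_zero_iff).mp h5
    exact hs0 (qL_inj H J K hmul (by simpa [qL, qRep_zero] using hvec))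
  obtain ⟨c, hc⟩ := hex
  refine ⟨w c, ?_, hkey c⟩
  intro h0
  exact hc (by rw [h0]; rfl)
end
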